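/- arXiv:2004.05501 — 3 statements merged into one kernel-verified Lean document; each statement's English description precedes it below -/
import Mathlib

section
/- Let (E, σ, θ) be a plane graph with labeling t : E → Fin 3 such that (σ∘θ)^3 = id, t(θ(e)) = t(e) for all e, and t(σ(θ(e))) ≠ t(e) for all e. Let H be a subgroup of the permutation group of E such that every ρ ∈ H commutes with σ and with θ and satisfies t(ρ(e)) = t(e) for all e. Then on the quotient Ē = E/H with induced maps σ̄(ē) = (σ(e))‾ and θ̄(ē) = (θ(e))‾, every orbit of σ̄∘θ̄ has exactly 3 elements. In other words, the quotient plane graph (the double chamber decoration) is a plane triangulation. -/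
section Aux
variable {E : Type*} (H : Subgroup (Equiv.Perm E))

lemma aux_sound (π : Equiv.Perm E) (hc : ∀ ρ ∈ H, ∀ e : E, π (ρ e) = ρ (π e)) :
    ∀ x y : E, MulAction.orbitRel H E x y → MulAction.orbitRel H E (π x) (π y) := by
  intro x y hxy
  obtain ⟨ρ, hρ⟩ := hxy
  refine ⟨ρ, ?_⟩
  have h1 : (ρ : Equiv.Perm E) y = x := hρ
  show (ρ : Equiv.Perm E) (π y) = π x
  rw [← hc ρ ρ.2 y, h1]

noncomputable def auxLift (π : Equiv.Perm E) (hc : ∀ ρ ∈ H, ∀ e : E, π (ρ e) = ρ (π e)) :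
    Equiv.Perm (Quotient (MulAction.orbitRel H E)) where
  toFun := Quotient.map π (aux_sound H π hc)
  invFun := Quotient.map π.symm (aux_sound H π.symm (by
    intro ρ hρ e
    have := hc ρ hρ (π.symm e)
    simp at this
    exact π.symm_apply_eq.2 this.symm))
  left_inv := by
    refine Quotient.ind ?_
    intro e
    simp [Quotient.map_mk]
  right_inv := by
    refine Quotient.ind ?_
    intro e
    simp [Quotient.map_mk]

lemma auxLift_mk (π : Equiv.Perm E) (hc) (e : E) :
    auxLift H π hc (Quotient.mk (MulAction.orbitRel H E) e)
      = Quotient.mk (MulAction.orbitRel H E) (π e) := rfl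

end Aux

/-- If `(E, σ, θ)` is a plane graph with labeling `t` satisfying `(σ∘θ)^3 = id`,
`t (θ e) = t e` and `t (σ (θ e)) ≠ t e`, and `H` is a subgroup of permutations commuting with
`σ` and `θ` and preserving `t`, then on the quotient `Ē = E/H` every orbit of the induced
permutation `σ̄∘θ̄` has exactly 3 elements: the double chamber decoration is a triangulation. -/
theorem decoration_is_triangulation (E : Type*) (σ θ : Equiv.Perm E) (t : E → Fin 3)
    (h3 : (σ * θ) ^ 3 = 1)
    (htθ : ∀ e : E, t (θ e) = t e)
    (htσθ : ∀ e : E, t (σ (θ e)) ≠ t e)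
    (H : Subgroup (Equiv.Perm E))
    (hσ : ∀ ρ ∈ H, ρ * σ = σ * ρ)
    (hθ : ∀ ρ ∈ H, ρ * θ = θ * ρ)
    (ht : ∀ ρ ∈ H, ∀ e : E, t (ρ e) = t e) :
    ∃ (σb θb : Equiv.Perm (Quotient (MulAction.orbitRel H E))),
      (∀ e : E, σb (Quotient.mk (MulAction.orbitRel H E) e)
          = Quotient.mk (MulAction.orbitRel H E) (σ e)) ∧
      (∀ e : E, θb (Quotient.mk (MulAction.orbitRel H E) e)
          = Quotient.mk (MulAction.orbitRel H E) (θ e)) ∧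
      (∀ q : Quotient (MulAction.orbitRel H E),
        Set.ncard {x | ∃ n : ℤ, ((σb * θb) ^ n) q = x} = 3) := by
  classical
  have hcσ : ∀ ρ ∈ H, ∀ e : E, σ (ρ e) = ρ (σ e) := by
    intro ρ hρ e
    have := congrArg (fun p => (p : Equiv.Perm E) e) (hσ ρ hρ)
    simpa using this.symm
  have hcθ : ∀ ρ ∈ H, ∀ e : E, θ (ρ e) = ρ (θ e) := by
    intro ρ hρ e
    have := congrArg (fun p => (p : Equiv.Perm E) e) (hθ ρ hρ)
    simpa using this.symm
  refine ⟨auxLift H σ hcσ, auxLift H θ hcθ, fun e => rfl, fun e => rfl, ?_⟩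
  set g := auxLift H σ hcσ * auxLift H θ hcθ with hg
  have hgmk : ∀ e : E, g (Quotient.mk (MulAction.orbitRel H E) e)
      = Quotient.mk (MulAction.orbitRel H E) (σ (θ e)) := fun e => rfl
  -- g^3 = 1
  have hg3 : g ^ 3 = 1 := by
    ext q
    induction q using Quotient.ind with
    | _ e =>
      have : ((σ * θ) ^ 3) e = e := by rw [h3]; rfl
      have h' : σ (θ (σ (θ (σ (θ e))))) = e := by
        simpa [pow_succ, Equiv.Perm.mul_apply] using this
      simp only [pow_succ, pow_zero, one_mul, Equiv.Perm.mul_apply, Equiv.Perm.one_apply]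
      rw [hgmk, hgmk, hgmk, h']
  -- g is fixed-point-free
  have hfpf : ∀ q, g q ≠ q := by
    refine Quotient.ind ?_
    intro e h
    rw [hgmk] at h
    have h2 := Quotient.exact h
    obtain ⟨ρ, hρ⟩ := h2
    have h1 : (ρ : Equiv.Perm E) e = σ (θ e) := hρ
    exact htσθ e (by rw [← h1, ht ρ ρ.2])
  intro q
  have hq1 : g q ≠ q := hfpf q
  have hq2 : g (g q) ≠ q := by
    intro h
    have := congrArg g h
    have h3q : g (g (g q)) = q := by
      have := congrArg (fun p => p q) hg3
      simpa [pow_succ, Equiv.Perm.mul_apply] using this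
    rw [h3q] at this
    exact hq1 this.symm
  have hq3 : g (g q) ≠ g q := hfpf (g q)
  have hset : {x | ∃ n : ℤ, ((g : Equiv.Perm _) ^ n) q = x} = {q, g q, g (g q)} := by
    ext x
    simp only [Set.mem_setOf_eq, Set.mem_insert_iff, Set.mem_singleton_iff]
    constructor
    · rintro ⟨n, rfl⟩
      have hdvd : (g ^ (3 : ℤ)) = 1 := by rw [zpow_ofNat]; exact_mod_cast hg3
      have hn : g ^ n = g ^ (n % 3) := by
        conv_lhs => rw [← Int.emod_add_mul_ediv n 3]
        rw [zpow_add, zpow_mul, hdvd, one_zpow, mul_one]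
      have h0 : 0 ≤ n % 3 := Int.emod_nonneg n (by norm_num)
      have h3' : n % 3 < 3 := Int.emod_lt_of_pos n (by norm_num)
      interval_cases h : (n % 3)
      · left; rw [hn]; simp
      · right; left; rw [hn]; simp [zpow_one]
      · right; right; rw [hn]
        show (g ^ (2:ℤ)) q = g (g q)
        rw [show (2:ℤ) = 1 + 1 by ring, zpow_add, zpow_one]
        rfl
    · rintro (rfl | rfl | rfl)
      · exact ⟨0, rfl⟩
      · exact ⟨1, rfl⟩
      · exact ⟨2, by show (g ^ (2:ℤ)) q = g (g q); rw [show (2:ℤ) = 1 + 1 by ring, zpow_add, zpow_one]; rfl⟩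
  rw [hset]
  rw [Set.ncard_insert_of_notMem (by simp [hq1.symm, hq2.symm]) ((Set.finite_singleton _).insert _),
    Set.ncard_pair hq3.symm]
end

section
/- Let G be a simple graph on a finite vertex set V with at least 3 vertices such that for every vertex v, the induced subgraph of G on V \ {v} is connected (i.e., G is 2-connected). Then for any three pairwise distinct vertices v0, v1, v2 of G there exist a path p from v1 to v0 and a path q from v0 to v2 in G such that the only vertex lying on both p and q is v0. In particular, their concatenation is a simple path from v1 to v2 through v0. -/
open SimpleGraph Walk

namespace ThroughV0

variable {W : Type*} {H : SimpleGraph W}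

lemma append_isPath {u v w : W} {p : H.Walk u v} {q : H.Walk v w}
    (hp : p.IsPath) (hq : q.IsPath) (h : ∀ x, x ∈ p.support → x ∈ q.support → x = v) :
    (p.append q).IsPath := by
  rw [Walk.isPath_def, Walk.support_append]
  refine List.Nodup.append hp.support_nodup hq.support_nodup.tail ?_
  intro x hx hx'
  have hxq : x ∈ q.support := List.mem_of_mem_tail hx'
  have hxv := h x hx hxq
  subst hxv
  have := hq.support_nodup
  rw [q.support_eq_cons] at this
  exact (List.nodup_cons.mp this).1 hx'

lemma eq_of_append_isPath {u v w : W} {p : H.Walk u v} {q : H.Walk v w}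
    (h : (p.append q).IsPath) {x : W} (hx : x ∈ p.support) (hx' : x ∈ q.support) : x = v := by
  by_contra hne
  rw [Walk.isPath_def, Walk.support_append] at h
  have : x ∈ q.support.tail := by
    rw [q.support_eq_cons] at hx'
    rcases List.mem_cons.mp hx' with h' | h'
    · exact absurd h' hne
    · exact h'
  exact (List.disjoint_of_nodup_append h) hx this

lemma exists_prefix_until (S : Set W) :
    ∀ {v u : W} (R : H.Walk v u), u ∈ S →
    ∃ (z : W) (R1 : H.Walk v z), z ∈ S ∧ (∀ x ∈ R1.support, x ∈ S → x = z) ∧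
      R1.support ⊆ R.support := by
  intro v u R
  induction R with
  | nil =>
    intro h
    exact ⟨_, Walk.nil, h, by simp, by simp⟩
  | @cons a b c h t ih =>
    intro hu
    by_cases ha : a ∈ S
    · refine ⟨a, Walk.nil, ha, by simp, by simp⟩
    · obtain ⟨z, R1, hz, hmin, hsub⟩ := ih hu
      refine ⟨z, Walk.cons h R1, hz, ?_, ?_⟩
      · intro x hx hxS
        rw [Walk.support_cons] at hx
        rcases List.mem_cons.mp hx with rfl | hx
        · exact absurd hxS ha
        · exact hmin x hx hxS
      · rw [Walk.support_cons, Walk.support_cons]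
        exact List.cons_subset_cons a hsub

lemma reachable_induce_of_walk {S : Set W} :
    ∀ {a b : W} (w : H.Walk a b), (∀ x ∈ w.support, x ∈ S) → ∀ (ha : a ∈ S) (hb : b ∈ S),
    (H.induce S).Reachable ⟨a, ha⟩ ⟨b, hb⟩ := by
  intro a b w
  induction w with
  | nil => intro _ ha hb; rfl
  | @cons a c b h t ih =>
    intro hw ha hb
    have hc : c ∈ S := hw c (by simp)
    have hadj : (H.induce S).Adj ⟨a, ha⟩ ⟨c, hc⟩ := by
      simp only [comap_adj, Function.Embedding.coe_subtype]
      exact h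
    exact hadj.reachable.trans (ih (fun x hx => hw x (by simp [hx])) hc hb)

lemma walk_down_induce {S : Set W} {a b : (↥S)} (w : (H.induce S).Walk a b) :
    ∃ w' : H.Walk a.val b.val, ∀ x ∈ w'.support, x ∈ S := by
  refine ⟨w.map (SimpleGraph.Embedding.induce S).toHom, ?_⟩
  intro x hx
  replace hx : x ∈ w.support.map (SimpleGraph.Embedding.induce (G := H) S).toHom := by
    rw [← Walk.support_map]; exact hx
  obtain ⟨y, _, rfl⟩ := List.mem_map.mp hx
  exact y.prop

lemma exists_path_avoiding (h2 : ∀ x : W, (H.induce ({x}ᶜ : Set W)).Connected)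
    (x u v : W) (hu : u ≠ x) (hv : v ≠ x) :
    ∃ R : H.Walk u v, R.IsPath ∧ x ∉ R.support := by
  classical
  have hr := (h2 x).preconnected ⟨u, by simp [hu]⟩ ⟨v, by simp [hv]⟩
  obtain ⟨w⟩ := hr
  obtain ⟨w', hw'⟩ := walk_down_induce w
  refine ⟨w'.bypass, w'.bypass_isPath, fun hx => ?_⟩
  have := hw' x (w'.support_bypass_subset hx)
  simp at this

lemma connected_of_h2 [Fintype W] (hc : 3 ≤ Fintype.card W)
    (h2 : ∀ x : W, (H.induce ({x}ᶜ : Set W)).Connected) : H.Connected := by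
  classical
  haveI hne : Nonempty W := by
    rw [← Fintype.card_pos_iff]; omega
  refine ⟨fun u v => ?_⟩
  rcases eq_or_ne u v with rfl | huv
  · rfl
  · have : ∃ x : W, x ≠ u ∧ x ≠ v := by
      by_contra h
      push_neg at h
      have : (Finset.univ : Finset W) ⊆ {u, v} := by
        intro x _
        rcases (em (x = u)) with rfl | hx
        · simp
        · simp [h x hx]
      have := Finset.card_le_card this
      simp only [Finset.card_univ] at this
      have h2card : ({u, v} : Finset W).card ≤ 2 := Finset.card_insert_le _ _ |>.trans (by simp)
      omega
    obtain ⟨x, hxu, hxv⟩ := this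
    obtain ⟨R, _, _⟩ := exists_path_avoiding h2 x u v (Ne.symm hxu) (Ne.symm hxv)
    exact ⟨R⟩


section Cases

variable {u w v : W}

/-- Case: `v` already lies on `Q`. -/
lemma case_mem {P Q : H.Walk u w} (hP : P.IsPath) (hQ : Q.IsPath)
    (hdisj : ∀ x, x ∈ P.support → x ∈ Q.support → x = u ∨ x = w)
    (hadj : H.Adj w v) (hvu : v ≠ u) (hvw : v ≠ w) (hvQ : v ∈ Q.support) :
    ∃ A B : H.Walk u v, A.IsPath ∧ B.IsPath ∧
      ∀ x, x ∈ A.support → x ∈ B.support → x = u ∨ x = v := by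
  classical
  have hvP : v ∉ P.support := fun hp => by
    rcases hdisj v hp hvQ with h | h
    exacts [hvu h, hvw h]
  have hQsplit : ((Q.takeUntil v hvQ).append (Q.dropUntil v hvQ)).IsPath := by
    rw [Walk.take_spec Q hvQ]; exact hQ
  have hwTake : w ∉ (Q.takeUntil v hvQ).support := by
    intro hw
    exact hvw ((eq_of_append_isPath hQsplit hw (Q.dropUntil v hvQ).end_mem_support).symm)
  set E : H.Walk w v := Walk.cons hadj Walk.nil with hE
  have hEsupp : E.support = [w, v] := by simp [hE]
  have hA : (P.append E).IsPath := by
    refine append_isPath hP (by simp [hE, Walk.isPath_def, hvw.symm]) ?_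
    intro x hx hx'
    rw [hEsupp] at hx'
    rcases List.mem_cons.mp hx' with rfl | hx'
    · rfl
    · simp only [List.mem_singleton] at hx'
      subst hx'
      exact absurd hx hvP
  refine ⟨P.append E, Q.takeUntil v hvQ, hA, hQ.takeUntil _, ?_⟩
  intro x hxA hxB
  have hxQ : x ∈ Q.support := (Q.support_takeUntil_subset hvQ) hxB
  rcases (Walk.mem_support_append_iff _ _).mp hxA with hxP | hxE
  · rcases hdisj x hxP hxQ with h | h
    · exact Or.inl h
    · subst h; exact absurd hxB hwTake
  · rw [hEsupp] at hxE
    rcases List.mem_cons.mp hxE with rfl | hxE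
    · exact absurd hxB hwTake
    · simp only [List.mem_singleton] at hxE
      exact Or.inr hxE

/-- Main case: `v` is on neither path; `z` is the first vertex of a `v→u` walk lying on
`P.support ∪ Q.support`, and `z ∈ P.support`. -/
lemma case_notmem {P Q : H.Walk u w} (hP : P.IsPath) (hQ : Q.IsPath)
    (hdisj : ∀ x, x ∈ P.support → x ∈ Q.support → x = u ∨ x = w)
    (hadj : H.Adj w v) (hvu : v ≠ u) (hvw : v ≠ w)
    (hvP : v ∉ P.support) (hvQ : v ∉ Q.support)
    {z : W} (R2 : H.Walk v z) (hR2 : R2.IsPath) (hzP : z ∈ P.support)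
    (hmin : ∀ x ∈ R2.support, (x ∈ P.support ∨ x ∈ Q.support) → x = z)
    (hwR : w ∉ R2.support) :
    ∃ A B : H.Walk u v, A.IsPath ∧ B.IsPath ∧
      ∀ x, x ∈ A.support → x ∈ B.support → x = u ∨ x = v := by
  classical
  have hPsplit : ((P.takeUntil z hzP).append (P.dropUntil z hzP)).IsPath := by
    rw [Walk.take_spec P hzP]; exact hP
  have hzw : z ≠ w := fun h => hwR (h ▸ R2.end_mem_support)
  have hwTake : w ∉ (P.takeUntil z hzP).support := by
    intro hw
    exact hzw (eq_of_append_isPath hPsplit hw (P.dropUntil z hzP).end_mem_support).symm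
  set E : H.Walk w v := Walk.cons hadj Walk.nil with hE
  have hEsupp : E.support = [w, v] := by simp [hE]
  have hA : ((P.takeUntil z hzP).append R2.reverse).IsPath := by
    refine append_isPath (hP.takeUntil _) hR2.reverse ?_
    intro x hx hx'
    rw [Walk.support_reverse, List.mem_reverse] at hx'
    exact hmin x hx' (Or.inl ((P.support_takeUntil_subset hzP) hx))
  have hB : (Q.append E).IsPath := by
    refine append_isPath hQ (by simp [hE, Walk.isPath_def, hvw.symm]) ?_
    intro x hx hx'
    rw [hEsupp] at hx'
    rcases List.mem_cons.mp hx' with rfl | hx'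
    · rfl
    · simp only [List.mem_singleton] at hx'
      subst hx'
      exact absurd hx hvQ
  refine ⟨(P.takeUntil z hzP).append R2.reverse, Q.append E, hA, hB, ?_⟩
  intro x hxA hxB
  rcases (Walk.mem_support_append_iff _ _).mp hxB with hxQ | hxE
  swap
  · rw [hEsupp] at hxE
    rcases List.mem_cons.mp hxE with rfl | hxE
    · -- x = w
      exfalso
      rcases (Walk.mem_support_append_iff _ _).mp hxA with hxT | hxR
      · exact hwTake hxT
      · rw [Walk.support_reverse, List.mem_reverse] at hxR
        exact hwR hxR
    · simp only [List.mem_singleton] at hxE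
      exact Or.inr hxE
  · rcases (Walk.mem_support_append_iff _ _).mp hxA with hxT | hxR
    · rcases hdisj x ((P.support_takeUntil_subset hzP) hxT) hxQ with h | h
      · exact Or.inl h
      · exact absurd (h ▸ hxT) hwTake
    · rw [Walk.support_reverse, List.mem_reverse] at hxR
      have hxz : x = z := hmin x hxR (Or.inr hxQ)
      subst hxz
      rcases hdisj x hzP hxQ with h | h
      · exact Or.inl h
      · exact absurd h hzw
  
end Cases


lemma two_disjoint_paths (hconn : H.Connected)
    (h2 : ∀ x : W, (H.induce ({x}ᶜ : Set W)).Connected)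
    (u v : W) (huv : u ≠ v) :
    ∃ P Q : H.Walk u v, P.IsPath ∧ Q.IsPath ∧
      ∀ x, x ∈ P.support → x ∈ Q.support → x = u ∨ x = v := by
  classical
  obtain ⟨n, hn⟩ : ∃ n, H.dist u v = n := ⟨_, rfl⟩
  induction n using Nat.strong_induction_on generalizing u v with
  | _ n ih =>
  subst hn
  have hreach : H.Reachable u v := hconn.preconnected u v
  have hpos : 0 < H.dist u v := hconn.pos_dist_of_ne huv
  rcases Nat.lt_or_ge (H.dist u v) 2 with hlt | hge
  · -- dist = 1 : adjacent
    have h1 : H.dist u v = 1 := by omega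
    have hadj : H.Adj u v := SimpleGraph.dist_eq_one_iff_adj.mp h1
    refine ⟨Walk.cons hadj Walk.nil, Walk.cons hadj Walk.nil, ?_, ?_, ?_⟩
    · simp [Walk.isPath_def, huv]
    · simp [Walk.isPath_def, huv]
    · intro x hx _
      simp only [Walk.support_cons, Walk.support_nil, List.mem_cons,
        List.mem_singleton] at hx
      tauto
  · -- dist ≥ 2
    obtain ⟨p, hp⟩ := hreach.exists_walk_length_eq_dist
    obtain ⟨w, hadj', t, ht⟩ := Walk.exists_eq_cons_of_ne (Ne.symm huv) p.reverse
    -- hadj' : H.Adj v w, t : H.Walk w u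
    have htlen : t.length + 1 = H.dist u v := by
      have := congrArg Walk.length ht
      rw [Walk.length_reverse] at this
      simp only [Walk.length_cons] at this
      omega
    have hdistw : H.dist u w = H.dist u v - 1 := by
      have hle : H.dist u w ≤ H.dist u v - 1 := by
        have := SimpleGraph.dist_le t.reverse
        rw [Walk.length_reverse] at this
        omega
      have hge' : H.dist u v ≤ H.dist u w + 1 := by
        obtain ⟨q, hq⟩ := (SimpleGraph.Reachable.symm ⟨t⟩ : H.Reachable u w).exists_walk_length_eq_dist
        have := SimpleGraph.dist_le (q.append (Walk.cons hadj'.symm Walk.nil))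
        rw [Walk.length_append] at this
        simp only [Walk.length_cons, Walk.length_nil] at this
        omega
      omega
    have huw : u ≠ w := by
      intro h
      subst h
      rw [SimpleGraph.dist_self] at hdistw
      omega
    obtain ⟨P, Q, hP, hQ, hdisj⟩ := ih (H.dist u w) (by omega) u w huw rfl
    have hvw : v ≠ w := fun h => H.irrefl (h ▸ hadj')
    have hadj : H.Adj w v := hadj'.symm
    by_cases hvPQ : v ∈ P.support ∨ v ∈ Q.support
    · rcases hvPQ with hvP | hvQ
      · obtain ⟨A, B, hA, hB, hd⟩ := case_mem hQ hP
          (fun x hx hx' => hdisj x hx' hx) hadj (Ne.symm huv) hvw hvP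
        exact ⟨A, B, hA, hB, hd⟩
      · exact case_mem hP hQ hdisj hadj (Ne.symm huv) hvw hvQ
    · push_neg at hvPQ
      obtain ⟨hvP, hvQ⟩ := hvPQ
      obtain ⟨R, hRpath, hwR⟩ := exists_path_avoiding h2 w v u hvw huw
      obtain ⟨z, R1, hzS, hmin, hsub⟩ :=
        exists_prefix_until (H := H) {x | x ∈ P.support ∨ x ∈ Q.support} R
          (Or.inl P.start_mem_support)
      have hR2path : R1.bypass.IsPath := R1.bypass_isPath
      have hmin2 : ∀ x ∈ R1.bypass.support, (x ∈ P.support ∨ x ∈ Q.support) → x = z :=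
        fun x hx hx' => hmin x (R1.support_bypass_subset hx) hx'
      have hwR2 : w ∉ R1.bypass.support :=
        fun h => hwR (hsub (R1.support_bypass_subset h))
      rcases hzS with hzP | hzQ
      · exact case_notmem hP hQ hdisj hadj (Ne.symm huv) hvw hvP hvQ R1.bypass hR2path hzP
          hmin2 hwR2
      · exact case_notmem hQ hP (fun x hx hx' => hdisj x hx' hx) hadj (Ne.symm huv) hvw hvQ hvP
          R1.bypass hR2path hzQ (fun x hx hx' => hmin2 x hx (Or.symm hx')) hwR2


section Apex

variable {V : Type*}

/-- `G` together with an extra apex vertex `none` joined to `v1` and `v2`. -/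
def apexGraph (G : SimpleGraph V) (v1 v2 : V) : SimpleGraph (Option V) where
  Adj a b := (∃ a' b', a = some a' ∧ b = some b' ∧ G.Adj a' b') ∨
    (a = none ∧ (b = some v1 ∨ b = some v2)) ∨
    (b = none ∧ (a = some v1 ∨ a = some v2))
  symm := by
    constructor
    rintro a b (⟨a', b', rfl, rfl, h⟩ | ⟨rfl, h⟩ | ⟨rfl, h⟩)
    · exact Or.inl ⟨b', a', rfl, rfl, h.symm⟩
    · exact Or.inr (Or.inr ⟨rfl, h⟩)
    · exact Or.inr (Or.inl ⟨rfl, h⟩)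
  loopless := by
    constructor
    rintro a (⟨a', b', rfl, hb, h⟩ | ⟨rfl, h | h⟩ | ⟨rfl, h | h⟩) <;>
      simp_all [G.irrefl]

variable {G : SimpleGraph V} {v1 v2 : V}

lemma apex_adj_some_some {a b : V} :
    (apexGraph G v1 v2).Adj (some a) (some b) ↔ G.Adj a b := by
  constructor
  · rintro (⟨a', b', ha, hb, h⟩ | ⟨h, _⟩ | ⟨h, _⟩)
    · cases ha; cases hb; exact h
    · exact absurd h (by simp)
    · exact absurd h (by simp)
  · intro h
    exact Or.inl ⟨a, b, rfl, rfl, h⟩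

lemma apex_adj_none {y : Option V} (h : (apexGraph G v1 v2).Adj none y) :
    y = some v1 ∨ y = some v2 := by
  rcases h with ⟨a', b', ha, _, _⟩ | ⟨_, h⟩ | ⟨rfl, h⟩
  · exact absurd ha (by simp)
  · exact h
  · exact absurd h (by rintro (h | h) <;> simp_all)

/-- Hom from `G` into the apex graph. -/
def apexHom (G : SimpleGraph V) (v1 v2 : V) : G →g apexGraph G v1 v2 where
  toFun := some
  map_rel' := fun h => Or.inl ⟨_, _, rfl, rfl, h⟩

lemma down_walk :
    ∀ {x y : Option V} (w : (apexGraph G v1 v2).Walk x y), none ∉ w.support →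
    ∀ {a b : V}, x = some a → y = some b →
    ∃ w' : G.Walk a b, w'.support.map some = w.support := by
  intro x y w
  induction w with
  | nil =>
    intro _ a b hx hy
    subst hx
    cases Option.some_injective _ hy
    exact ⟨Walk.nil, by simp⟩
  | @cons x c y h t ih =>
    intro hnone a b hx hy
    subst hx
    have hct : c ∈ t.support := t.start_mem_support
    have hc : c ≠ none := by
      rintro rfl
      exact hnone (by simp [Walk.support_cons, hct])
    obtain ⟨c', rfl⟩ := Option.ne_none_iff_exists'.mp hc
    have hnone' : none ∉ t.support := fun h' => hnone (by simp [Walk.support_cons, h'])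
    obtain ⟨t', ht'⟩ := ih hnone' rfl hy
    refine ⟨Walk.cons (apex_adj_some_some.mp h) t', ?_⟩
    simp [Walk.support_cons, ht']

lemma apex_h2 [Fintype V] (hcard : 3 ≤ Fintype.card V)
    (h2 : ∀ v : V, (G.induce ({v}ᶜ : Set V)).Connected) (h12 : v1 ≠ v2) :
    ∀ x : Option V, ((apexGraph G v1 v2).induce ({x}ᶜ : Set (Option V))).Connected := by
  classical
  have hGconn : G.Connected := connected_of_h2 hcard h2
  haveI : Nonempty V := hGconn.nonempty
  intro x
  cases x with
  | none =>
    haveI : Nonempty ({(none : Option V)}ᶜ : Set (Option V)) :=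
      ⟨⟨some (Classical.arbitrary V), by simp⟩⟩
    refine ⟨fun a b => ?_⟩
    obtain ⟨a', ha'⟩ := Option.ne_none_iff_exists'.mp (Set.mem_compl_singleton_iff.mp a.prop)
    obtain ⟨b', hb'⟩ := Option.ne_none_iff_exists'.mp (Set.mem_compl_singleton_iff.mp b.prop)
    obtain ⟨p⟩ := hGconn.preconnected a' b'
    have hr := reachable_induce_of_walk (S := ({(none : Option V)}ᶜ : Set (Option V)))
      (p.map (apexHom G v1 v2)) ?_ (Set.mem_compl_singleton_iff.mpr (Option.some_ne_none a'))
      (Set.mem_compl_singleton_iff.mpr (Option.some_ne_none b'))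
    · have ha : a = ⟨some a', by simp⟩ := Subtype.ext ha'
      have hb : b = ⟨some b', by simp⟩ := Subtype.ext hb'
      rw [ha, hb]
      exact hr
    · intro y hy
      rw [Walk.support_map] at hy
      obtain ⟨s, _, rfl⟩ := List.mem_map.mp hy
      exact Set.mem_compl_singleton_iff.mpr (Option.some_ne_none s)
  | some c =>
    obtain ⟨t, htmem, htc⟩ : ∃ t, (t = v1 ∨ t = v2) ∧ t ≠ c := by
      by_cases h : v1 = c
      · exact ⟨v2, Or.inr rfl, fun hc => h12 (h ▸ hc ▸ rfl)⟩
      · exact ⟨v1, Or.inl rfl, h⟩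
    have htT : (some t : Option V) ∈ ({some c}ᶜ : Set (Option V)) := by simp [htc]
    have key : ∀ y : ({(some c : Option V)}ᶜ : Set (Option V)),
        ((apexGraph G v1 v2).induce ({some c}ᶜ : Set (Option V))).Reachable y ⟨some t, htT⟩ := by
      rintro ⟨yv, hy⟩
      cases yv with
      | none =>
        refine Adj.reachable ?_
        simp only [comap_adj, Function.Embedding.coe_subtype]
        rcases htmem with rfl | rfl
        · exact Or.inr (Or.inl ⟨rfl, Or.inl rfl⟩)
        · exact Or.inr (Or.inl ⟨rfl, Or.inr rfl⟩)
      | some a =>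
        have ha : a ≠ c := by
          intro h; exact (Set.mem_compl_singleton_iff.mp hy) (by rw [h])
        by_cases hat : a = t
        · have : (⟨some a, hy⟩ : ({(some c : Option V)}ᶜ : Set (Option V))) = ⟨some t, htT⟩ :=
            Subtype.ext (show (some a : Option V) = some t by rw [hat])
          rw [this]
        · obtain ⟨R, _, hcR⟩ := exists_path_avoiding h2 c a t ha htc
          refine reachable_induce_of_walk (R.map (apexHom G v1 v2)) ?_ hy htT
          intro y hy'
          rw [Walk.support_map] at hy'
          obtain ⟨s, hs, rfl⟩ := List.mem_map.mp hy'
          refine Set.mem_compl_singleton_iff.mpr ?_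
          intro hsc
          exact hcR (by cases Option.some_injective _ hsc; exact hs)
    haveI : Nonempty ({(some c : Option V)}ᶜ : Set (Option V)) := ⟨⟨none, by simp⟩⟩
    exact ⟨fun a b => (key a).trans (key b).symm⟩

lemma final_pair {v0 a1 a2 : V} (t1 : (apexGraph G v1 v2).Walk (some a1) (some v0))
    (t2 : (apexGraph G v1 v2).Walk (some a2) (some v0)) (ht1 : t1.IsPath) (ht2 : t2.IsPath)
    (hn1 : none ∉ t1.support) (hn2 : none ∉ t2.support)
    (hd : ∀ x, x ∈ t1.support → x ∈ t2.support → x = some v0) :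
    ∃ (p : G.Walk a1 v0) (q : G.Walk v0 a2), p.IsPath ∧ q.IsPath ∧
      (∀ x, x ∈ p.support → x ∈ q.support → x = v0) ∧ (p.append q).IsPath := by
  obtain ⟨w1, hw1⟩ := down_walk t1 hn1 rfl rfl
  obtain ⟨w2, hw2⟩ := down_walk t2 hn2 rfl rfl
  have hp1 : w1.IsPath := by
    rw [Walk.isPath_def]
    have := ht1.support_nodup
    rw [← hw1] at this
    exact this.of_map _
  have hp2 : w2.IsPath := by
    rw [Walk.isPath_def]
    have := ht2.support_nodup
    rw [← hw2] at this
    exact this.of_map _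
  have hdis : ∀ x, x ∈ w1.support → x ∈ w2.reverse.support → x = v0 := by
    intro x hx hx'
    rw [Walk.support_reverse, List.mem_reverse] at hx'
    have h1 : some x ∈ t1.support := by
      rw [← hw1]; exact List.mem_map_of_mem hx
    have h2 : some x ∈ t2.support := by
      rw [← hw2]; exact List.mem_map_of_mem hx'
    exact Option.some_injective _ (hd _ h1 h2)
  exact ⟨w1, w2.reverse, hp1, hp2.reverse, hdis, append_isPath hp1 hp2.reverse hdis⟩

end Apex

end ThroughV0

/-- In a 2-connected simple graph (at least 3 vertices, and deleting any single
vertex leaves a connected graph), for any three pairwise distinct vertices `v0, v1, v2` there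
exist a path `p` from `v1` to `v0` and a path `q` from `v0` to `v2` meeting only in `v0`;
in particular their concatenation is a simple path from `v1` to `v2` through `v0`. -/
theorem simple_path_through_v0 {V : Type*} [Fintype V] (G : SimpleGraph V)
    (hcard : 3 ≤ Fintype.card V)
    (h2conn : ∀ v : V, (G.induce ({v}ᶜ : Set V)).Connected)
    (v0 v1 v2 : V) (h01 : v0 ≠ v1) (h02 : v0 ≠ v2) (h12 : v1 ≠ v2) :
    ∃ (p : G.Walk v1 v0) (q : G.Walk v0 v2), p.IsPath ∧ q.IsPath ∧
      (∀ x : V, x ∈ p.support → x ∈ q.support → x = v0) ∧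
      (p.append q).IsPath := by
  classical
  have hcard' : 3 ≤ Fintype.card (Option V) := by rw [Fintype.card_option]; omega
  have h2' := ThroughV0.apex_h2 (G := G) (v1 := v1) (v2 := v2) hcard h2conn h12
  have hconn' : (ThroughV0.apexGraph G v1 v2).Connected :=
    ThroughV0.connected_of_h2 hcard' h2'
  obtain ⟨P1, P2, hP1, hP2, hdisj⟩ :=
    ThroughV0.two_disjoint_paths hconn' h2' (some v0) none (by simp)
  obtain ⟨y1, ha1, t1, hPt1⟩ :=
    Walk.exists_eq_cons_of_ne (show (none : Option V) ≠ some v0 by simp) P1.reverse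
  obtain ⟨y2, ha2, t2, hPt2⟩ :=
    Walk.exists_eq_cons_of_ne (show (none : Option V) ≠ some v0 by simp) P2.reverse
  have hrev1 : P1.reverse.IsPath := hP1.reverse
  have hrev2 : P2.reverse.IsPath := hP2.reverse
  rw [hPt1] at hrev1
  rw [hPt2] at hrev2
  rw [Walk.cons_isPath_iff] at hrev1 hrev2
  obtain ⟨ht1, hn1⟩ := hrev1
  obtain ⟨ht2, hn2⟩ := hrev2
  have hsub1 : t1.support ⊆ P1.support := by
    intro x hx
    have : x ∈ P1.reverse.support := by rw [hPt1, Walk.support_cons]; exact List.mem_cons_of_mem _ hx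
    rwa [Walk.support_reverse, List.mem_reverse] at this
  have hsub2 : t2.support ⊆ P2.support := by
    intro x hx
    have : x ∈ P2.reverse.support := by rw [hPt2, Walk.support_cons]; exact List.mem_cons_of_mem _ hx
    rwa [Walk.support_reverse, List.mem_reverse] at this
  have hd : ∀ x, x ∈ t1.support → x ∈ t2.support → x = some v0 := by
    intro x hx1 hx2
    rcases hdisj x (hsub1 hx1) (hsub2 hx2) with h | h
    · exact h
    · subst h; exact absurd hx1 hn1
  have hy1 := ThroughV0.apex_adj_none ha1
  have hy2 := ThroughV0.apex_adj_none ha2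
  have hy12 : y1 ≠ y2 := by
    intro h
    subst h
    rcases hdisj y1 (hsub1 t1.start_mem_support) (hsub2 t2.start_mem_support) with h | h
    · rcases hy1 with h' | h' <;> rw [h'] at h <;>
        [exact h01 (Option.some_injective _ h).symm; exact h02 (Option.some_injective _ h).symm]
    · rcases hy1 with h' | h' <;> simp [h'] at h
  rcases hy1 with rfl | rfl <;> rcases hy2 with rfl | rfl
  · exact absurd rfl hy12
  · obtain ⟨p, q, hp, hq, hpq, happ⟩ := ThroughV0.final_pair t1 t2 ht1 ht2 hn1 hn2 hd
    exact ⟨p, q, hp, hq, hpq, happ⟩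
  · obtain ⟨p, q, hp, hq, hpq, happ⟩ := ThroughV0.final_pair t2 t1 ht2 ht1 hn2 hn1
      (fun x hx hx' => hd x hx' hx)
    exact ⟨p, q, hp, hq, hpq, happ⟩
  · exact absurd rfl hy12
end

section
/- Let (E, σ, θ) be a plane graph (σ a permutation of E, θ a fixed-point-free involution of E). Let P1, P2 ⊆ E be such that the four sets P1, P2, θ(P1), θ(P2) are pairwise disjoint. Let C be a type and s1, s2 permutations of C. Define s : E → Perm(C) by s(e) = s2 if e ∈ P2, s(e) = s1⁻¹ if e ∈ P1, s(e) = s2⁻¹ if e ∈ θ(P2), s(e) = s1 if e ∈ θ(P1), and s(e) = id otherwise. Then the map θ_P : E × C → E × C given by θ_P(e, c) = (θ(e), s(e)(c)) is a fixed-point-free involution, and the map σ_P : E × C → E × C given by σ_P(e, c) = (σ(e), s(e)(c)) is a bijection. In particular (E × C, σ_P, θ_P) is again a plane graph. -/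
/-- Given a plane graph `(E, σ, θ)` (with `θ` a fixed-point-free involution),
pairwise disjoint sets `P1, P2, θ '' P1, θ '' P2`, and the family `s : E → Perm C` equal to
`s2` on `P2`, `s1⁻¹` on `P1`, `s2⁻¹` on `θ '' P2`, `s1` on `θ '' P1`, and the identity
elsewhere, the map `θ_P (e, c) = (θ e, s e c)` is a fixed-point-free involution and
`σ_P (e, c) = (σ e, s e c)` is a bijection, so `(E × C, σ_P, θ_P)` is again a plane graph. -/
theorem application_is_plane_graph {E C : Type*} (σ θ : Equiv.Perm E)
    (hθinv : ∀ e : E, θ (θ e) = e) (hθfpf : ∀ e : E, θ e ≠ e)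
    (P1 P2 : Set E)
    (hdisj : ([P1, P2, θ '' P1, θ '' P2] : List (Set E)).Pairwise Disjoint)
    (s1 s2 : Equiv.Perm C) (s : E → Equiv.Perm C)
    (hsP2 : ∀ e ∈ P2, s e = s2)
    (hsP1 : ∀ e ∈ P1, s e = s1⁻¹)
    (hsP2' : ∀ e ∈ θ '' P2, s e = s2⁻¹)
    (hsP1' : ∀ e ∈ θ '' P1, s e = s1)
    (hselse : ∀ e : E, e ∉ P1 ∪ P2 ∪ θ '' P1 ∪ θ '' P2 → s e = 1) :
    Function.Involutive (fun x : E × C => (θ x.1, s x.1 x.2)) ∧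
    (∀ x : E × C, (θ x.1, s x.1 x.2) ≠ x) ∧
    Function.Bijective (fun x : E × C => (σ x.1, s x.1 x.2)) := by
  have key : ∀ (e : E) (c : C), s (θ e) (s e c) = c := by
    intro e c
    by_cases h1 : e ∈ P1
    · rw [hsP1 e h1, hsP1' (θ e) ⟨e, h1, rfl⟩]; simp
    · by_cases h2 : e ∈ P2
      · rw [hsP2 e h2, hsP2' (θ e) ⟨e, h2, rfl⟩]; simp
      · by_cases h3 : e ∈ θ '' P1
        · obtain ⟨p, hp, rfl⟩ := h3
          rw [hsP1' (θ p) ⟨p, hp, rfl⟩, hθinv, hsP1 p hp]; simp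
        · by_cases h4 : e ∈ θ '' P2
          · obtain ⟨p, hp, rfl⟩ := h4
            rw [hsP2' (θ p) ⟨p, hp, rfl⟩, hθinv, hsP2 p hp]; simp
          · have he : e ∉ P1 ∪ P2 ∪ θ '' P1 ∪ θ '' P2 := by
              simp only [Set.mem_union, not_or]; exact ⟨⟨⟨h1, h2⟩, h3⟩, h4⟩
            have hte : θ e ∉ P1 ∪ P2 ∪ θ '' P1 ∪ θ '' P2 := by
              simp only [Set.mem_union, not_or]
              refine ⟨⟨⟨?_, ?_⟩, ?_⟩, ?_⟩
              · intro h; exact h3 ⟨θ e, h, hθinv e⟩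
              · intro h; exact h4 ⟨θ e, h, hθinv e⟩
              · rintro ⟨p, hp, hpe⟩
                have : p = e := by
                  have := congrArg θ hpe; rwa [hθinv, hθinv] at this
                exact h1 (this ▸ hp)
              · rintro ⟨p, hp, hpe⟩
                have : p = e := by
                  have := congrArg θ hpe; rwa [hθinv, hθinv] at this
                exact h2 (this ▸ hp)
            rw [hselse e he, hselse (θ e) hte]; simp
  refine ⟨?_, ?_, ?_⟩
  · intro ⟨e, c⟩
    simp only [Prod.mk.injEq]
    exact ⟨hθinv e, key e c⟩
  · intro ⟨e, c⟩
    simp only [Prod.mk.injEq, ne_eq, not_and]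
    intro h; exact absurd h (hθfpf e)
  · constructor
    · rintro ⟨e, c⟩ ⟨e', c'⟩ h
      simp only [Prod.mk.injEq] at h
      obtain ⟨h1, h2⟩ := h
      have he : e = e' := σ.injective h1
      subst he
      exact Prod.ext rfl ((s e).injective h2)
    · rintro ⟨e, c⟩
      exact ⟨(σ.symm e, (s (σ.symm e)).symm c), by simp⟩
end
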